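/- Let X be a metric space and let e₁, …, eₙ with n ≥ 3 be curves that pairwise intersect only in at most one point each (the edges of a polygon intersect only at shared endpoints). Let γ be a geodesic and suppose γ' is obtained from γ by replacing the subcurve of γ between its first and last intersection points with eₙ by the corresponding subcurve of eₙ (assumed to be a geodesic between those points). Then γ' is a geodesic with the same endpoints as γ, and |γ'| ∩ |eₙ| is connected. -/

import Mathlib

open Set

/-- A geodesic in a metric space: a continuous curve on `[0,1]` whose length
(one-dimensional variation) equals the distance between its endpoints. -/
def IsGeodesic {X : Type*} [MetricSpace X] (γ : ℝ → X) : Prop :=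
  ContinuousOn γ (Icc 0 1) ∧ eVariationOn γ (Icc 0 1) = edist (γ 0) (γ 1)

/-- Let `e₁, …, eₙ` (`n ≥ 3`) be curves pairwise intersecting in at most one point, and `γ`
a geodesic meeting the image `E` of `eᵢ`. If `γ'` is obtained from `γ` by replacing the
subcurve between the first and last intersection times with `E` by a geodesic subcurve `η`
of `eᵢ` between the same points, then `γ'` is a geodesic with the same endpoints as `γ`, and
`|γ'| ∩ E` is connected. -/
theorem stmt17 {X : Type*} [MetricSpace X] (n : ℕ) (hn : 3 ≤ n) (e : Fin n → ℝ → X)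
    (hecont : ∀ i, ContinuousOn (e i) (Icc 0 1))
    (hpair : ∀ i j, i ≠ j → ((e i '' Icc 0 1) ∩ (e j '' Icc 0 1)).Subsingleton)
    (i : Fin n) (E : Set X) (hE : E = e i '' Icc 0 1)
    (γ : ℝ → X) (hγ : IsGeodesic γ)
    (hmeet : {t ∈ Icc (0 : ℝ) 1 | γ t ∈ E}.Nonempty)
    (l r : ℝ) (hl : l = sInf {t ∈ Icc (0 : ℝ) 1 | γ t ∈ E})
    (hr : r = sSup {t ∈ Icc (0 : ℝ) 1 | γ t ∈ E})
    (η : ℝ → X) (hηc : ContinuousOn η (Icc 0 1))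
    (hη0 : η 0 = γ l) (hη1 : η 1 = γ r) (hηE : η '' Icc 0 1 ⊆ E)
    (hηgeo : eVariationOn η (Icc 0 1) = edist (η 0) (η 1)) :
    let γ' : ℝ → X := fun u =>
      if u < l then γ u else if u ≤ r then η ((u - l) / (r - l)) else γ u
    γ' 0 = γ 0 ∧ γ' 1 = γ 1 ∧
    eVariationOn γ' (Icc 0 1) = edist (γ 0) (γ 1) ∧
    IsConnected ((γ' '' Icc 0 1) ∩ E) := by
  intro γ'
  set S : Set ℝ := {t ∈ Icc (0 : ℝ) 1 | γ t ∈ E} with hS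
  -- basic facts about S, l, r
  have hEc : IsClosed E := by
    rw [hE]
    exact (isCompact_Icc.image_of_continuousOn (hecont i)).isClosed
  have hSeq : S = Icc 0 1 ∩ γ ⁻¹' E := by ext t; simp [hS, and_comm]
  have hScl : IsClosed S := by
    rw [hSeq]
    exact hγ.1.preimage_isClosed_of_isClosed isClosed_Icc hEc
  have hSsub : S ⊆ Icc 0 1 := fun t ht => ht.1
  have hbdd : BddBelow S := (bddBelow_Icc.mono hSsub)
  have hbdd' : BddAbove S := (bddAbove_Icc.mono hSsub)
  have hlS : l ∈ S := hl ▸ hScl.csInf_mem hmeet hbdd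
  have hrS : r ∈ S := hr ▸ hScl.csSup_mem hmeet hbdd'
  have hl0 : (0:ℝ) ≤ l := hlS.1.1
  have hr1 : r ≤ 1 := hrS.1.2
  have hlr : l ≤ r := hl ▸ hr ▸ csInf_le_csSup hmeet hbdd hbdd'
  have hle : ∀ t ∈ S, l ≤ t := fun t ht => hl ▸ csInf_le hbdd ht
  have hge : ∀ t ∈ S, t ≤ r := fun t ht => hr ▸ le_csSup hbdd' ht
  -- values of γ' at key points
  have hγ'l : γ' l = γ l := by
    simp only [γ', lt_irrefl, if_false, if_pos hlr, sub_self, zero_div, hη0]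
  have hγ'r : γ' r = γ r := by
    rcases eq_or_lt_of_le hlr with h | h
    · simpa [← h] using hγ'l
    · simp only [γ', not_lt.2 hlr, if_false, if_pos le_rfl,
        div_self (sub_ne_zero.2 (ne_of_gt h)), hη1]
  have hγ'eqlow : ∀ u, u ≤ l → γ' u = γ u := by
    intro u hu
    rcases eq_or_lt_of_le hu with h | h
    · rw [h]; exact hγ'l
    · simp [γ', h]
  have hγ'eqhigh : ∀ u, r ≤ u → γ' u = γ u := by
    intro u hu
    rcases eq_or_lt_of_le hu with h | h
    · rw [← h]; exact hγ'r
    · simp [γ', not_lt.2 (hlr.trans hu), not_le.2 h]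
  have hγ'mid : ∀ u, l ≤ u → u ≤ r → γ' u = η ((u - l) / (r - l)) := by
    intro u h1 h2
    simp [γ', not_lt.2 h1, h2]
  -- points strictly outside [l,r] are not mapped into E
  have hnotlow : ∀ u, u ∈ Icc (0:ℝ) 1 → u < l → γ u ∉ E := by
    intro u hu hul hmem
    exact absurd (hle u ⟨hu, hmem⟩) (not_le.2 hul)
  have hnothigh : ∀ u, u ∈ Icc (0:ℝ) 1 → r < u → γ u ∉ E := by
    intro u hu hur hmem
    exact absurd (hge u ⟨hu, hmem⟩) (not_le.2 hur)
  -- endpoints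
  have hend0 : γ' 0 = γ 0 := hγ'eqlow 0 hl0
  have hend1 : γ' 1 = γ 1 := hγ'eqhigh 1 hr1
  refine ⟨hend0, hend1, ?_, ?_⟩
  · -- the variation computation
    have hIcc : ∀ (f : ℝ → X) (a b c : ℝ), a ≤ b → b ≤ c →
        eVariationOn f (Icc a b) + eVariationOn f (Icc b c) = eVariationOn f (Icc a c) := by
      intro f a b c hab hbc
      have := eVariationOn.Icc_add_Icc f (s := univ) hab hbc (mem_univ b)
      simpa using this
    set A := eVariationOn γ (Icc 0 l) with hA
    set B := eVariationOn γ (Icc l r) with hB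
    set C := eVariationOn γ (Icc r 1) with hC
    have hsplit : A + B + C = edist (γ 0) (γ 1) := by
      rw [hA, hB, hC, hIcc γ 0 l r hl0 hlr, hIcc γ 0 r 1 (hl0.trans hlr) hr1]
      exact hγ.2
    -- the middle piece of γ' has the same variation as that of γ
    have hBeq : eVariationOn γ' (Icc l r) = B := by
      rcases eq_or_lt_of_le hlr with h | h
      · rw [← h]
        rw [eVariationOn.subsingleton γ' (by simp [Set.Icc_self] : (Icc l l).Subsingleton),
          hB, ← h, eVariationOn.subsingleton γ (by simp [Set.Icc_self] : (Icc l l).Subsingleton)]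
      · -- l < r : middle variation of γ' equals that of η on [0,1], which is edist (γ l) (γ r)
        have hφmono : MonotoneOn (fun u => (u - l) / (r - l)) (Icc l r) := by
          intro x hx y hy hxy
          exact div_le_div_of_nonneg_right (by linarith) (by linarith) |>.trans_eq rfl
        have hφim : (fun u => (u - l) / (r - l)) '' Icc l r = Icc 0 1 := by
          ext x
          constructor
          · rintro ⟨u, ⟨hu1, hu2⟩, rfl⟩
            constructor
            · exact div_nonneg (by linarith) (by linarith)
            · rw [div_le_one (by linarith)]; linarith
          · rintro ⟨hx0, hx1⟩
            refine ⟨l + x * (r - l), ⟨by nlinarith, by nlinarith⟩, ?_⟩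
            rw [div_eq_iff (sub_ne_zero.2 h.ne')]
            ring
        have h1 : eVariationOn γ' (Icc l r)
            = eVariationOn (η ∘ fun u => (u - l) / (r - l)) (Icc l r) := by
          apply eVariationOn.eq_of_eqOn
          intro u hu
          exact hγ'mid u hu.1 hu.2
        rw [h1, eVariationOn.comp_eq_of_monotoneOn η _ hφmono, hφim, hηgeo, hη0, hη1]
        -- now need: edist (γ l) (γ r) = B
        have hBup : edist (γ l) (γ r) ≤ B :=
          eVariationOn.edist_le γ ⟨le_rfl, hlr⟩ ⟨hlr, le_rfl⟩
        have hAup : edist (γ 0) (γ l) ≤ A :=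
          eVariationOn.edist_le γ ⟨le_rfl, hl0⟩ ⟨hl0, le_rfl⟩
        have hCup : edist (γ r) (γ 1) ≤ C :=
          eVariationOn.edist_le γ ⟨le_rfl, hr1⟩ ⟨hr1, le_rfl⟩
        have htri : edist (γ 0) (γ 1)
            ≤ edist (γ 0) (γ l) + edist (γ l) (γ r) + edist (γ r) (γ 1) :=
          (edist_triangle _ (γ r) _).trans (by
            gcongr
            exact edist_triangle _ _ _)
        have hfin : A + B + C ≠ ⊤ := by rw [hsplit]; exact edist_ne_top _ _
        have hAfin : A ≠ ⊤ := fun h => hfin (by simp [h])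
        have hCfin : C ≠ ⊤ := fun h => hfin (by simp [h])
        refine le_antisymm hBup ?_
        -- B ≤ edist (γ l) (γ r): from A+B+C ≤ A + edist + C and cancel
        have key : A + B + C ≤ A + edist (γ l) (γ r) + C := by
          rw [hsplit]
          calc edist (γ 0) (γ 1)
              ≤ edist (γ 0) (γ l) + edist (γ l) (γ r) + edist (γ r) (γ 1) := htri
            _ ≤ A + edist (γ l) (γ r) + C := by gcongr
        have key2 : A + B ≤ A + edist (γ l) (γ r) :=
          ENNReal.le_of_add_le_add_right hCfin key
        exact ENNReal.le_of_add_le_add_left hAfin key2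
    have hAeq : eVariationOn γ' (Icc 0 l) = A :=
      eVariationOn.eq_of_eqOn (fun u hu => hγ'eqlow u hu.2)
    have hCeq : eVariationOn γ' (Icc r 1) = C :=
      eVariationOn.eq_of_eqOn (fun u hu => hγ'eqhigh u hu.1)
    rw [← hIcc γ' 0 r 1 (hl0.trans hlr) hr1, ← hIcc γ' 0 l r hl0 hlr,
      hAeq, hBeq, hCeq, hsplit]
  · -- connectedness
    rcases eq_or_lt_of_le hlr with h | h
    · -- l = r : the intersection is the singleton {γ l}
      have : (γ' '' Icc 0 1) ∩ E = {γ l} := by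
        apply Subset.antisymm
        · rintro x ⟨⟨u, hu, rfl⟩, hxE⟩
          rcases lt_trichotomy u l with h1 | h1 | h1
          · exact absurd ((hγ'eqlow u h1.le) ▸ hxE) (hnotlow u hu h1)
          · simp [h1, hγ'l]
          · exact absurd ((hγ'eqhigh u (h ▸ h1.le)) ▸ hxE) (hnothigh u hu (h ▸ h1))
        · rintro x rfl
          exact ⟨⟨l, ⟨hl0, h ▸ hr1⟩, hγ'l⟩, hlS.2⟩
      rw [this]
      exact isConnected_singleton
    · -- l < r : the intersection is η '' Icc 0 1
      have him : (γ' '' Icc 0 1) ∩ E = η '' Icc 0 1 := by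
        apply Subset.antisymm
        · rintro x ⟨⟨u, hu, rfl⟩, hxE⟩
          rcases lt_or_ge u l with h1 | h1
          · exact absurd ((hγ'eqlow u h1.le) ▸ hxE) (hnotlow u hu h1)
          rcases le_or_gt u r with h2 | h2
          · refine ⟨(u - l) / (r - l), ⟨div_nonneg (by linarith) (by linarith), ?_⟩, (hγ'mid u h1 h2).symm⟩
            rw [div_le_one (by linarith)]; linarith
          · exact absurd ((hγ'eqhigh u h2.le) ▸ hxE) (hnothigh u hu h2)
        · rintro x ⟨t, ht, rfl⟩
          refine ⟨⟨l + t * (r - l), ⟨by nlinarith [ht.1, ht.2], by nlinarith [ht.1, ht.2, hl0, hr1]⟩, ?_⟩,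
            hηE ⟨t, ht, rfl⟩⟩
          rw [hγ'mid _ (by nlinarith [ht.1] : l ≤ l + t * (r - l))
            (by nlinarith [ht.2] : l + t * (r - l) ≤ r)]
          congr 1
          rw [div_eq_iff (sub_ne_zero.2 h.ne')]
          ring
      rw [him]
      exact (isConnected_Icc (by norm_num)).image η hηc
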